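/- Let A be an N×N Hermitian positive definite matrix with condition number κ = ‖A‖·‖A⁻¹‖ > 1, let 0 < ε < 1, let M = √(I − A/‖A‖), and let T ≥ ⌈κ·ln(1/ε)⌉ be an integer. Then (1/2)·‖ (∑_{k=0}^{T} M^k (I/N) M^k) / tr(∑_{k=0}^{T} M^k (I/N) M^k) − A⁻¹/tr(A⁻¹) ‖₁ ≤ ε. -/

import Mathlib

open scoped Matrix.Norms.L2Operator ComplexOrder
open Matrix

/-- The trace norm (sum of singular values) of a square complex matrix,
realized as `tr √(Mᴴ M)`. -/
noncomputable def traceNorm {n : ℕ} (M : Matrix (Fin n) (Fin n) ℂ) : ℝ :=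
  ((((Matrix.posSemidef_conjTranspose_mul_self M).1.eigenvectorUnitary : Matrix (Fin n) (Fin n) ℂ) *
      diagonal (fun i => ((Real.sqrt ((Matrix.posSemidef_conjTranspose_mul_self M).1.eigenvalues i) : ℝ) : ℂ)) *
      (star (Matrix.posSemidef_conjTranspose_mul_self M).1.eigenvectorUnitary :
        Matrix (Fin n) (Fin n) ℂ)).trace).re

namespace MIaux
variable {n : ℕ} {U : Matrix (Fin n) (Fin n) ℂ}

lemma conj_mul (h1 : star U * U = 1) (d e : Fin n → ℂ) :
    (U * diagonal d * star U) * (U * diagonal e * star U)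
      = U * diagonal (d * e) * star U := by
  simp only [mul_assoc]
  rw [← mul_assoc (star U) U, h1, one_mul, ← mul_assoc (diagonal d),
    diagonal_mul_diagonal]
  rfl

lemma conj_one (h2 : U * star U = 1) :
    (1 : Matrix (Fin n) (Fin n) ℂ) = U * diagonal 1 * star U := by
  have : (1 : Fin n → ℂ) = fun _ => 1 := rfl
  rw [this, diagonal_one, mul_one, h2]

lemma conj_pow (h1 : star U * U = 1) (h2 : U * star U = 1) (d : Fin n → ℂ) (k : ℕ) :
    (U * diagonal d * star U) ^ k = U * diagonal (d ^ k) * star U := by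
  induction k with
  | zero => simpa using conj_one h2
  | succ k ih => rw [pow_succ, ih, conj_mul h1, ← pow_succ]

lemma conj_smul (c : ℂ) (d : Fin n → ℂ) :
    c • (U * diagonal d * star U) = U * diagonal (c • d) * star U := by
  rw [diagonal_smul, mul_smul_comm, smul_mul_assoc]

lemma conj_sub (d e : Fin n → ℂ) :
    (U * diagonal d * star U) - (U * diagonal e * star U)
      = U * diagonal (d - e) * star U := by
  have : d - e = fun i => d i - e i := rfl
  rw [this, ← diagonal_sub, mul_sub, sub_mul]

lemma conj_sum {ι : Type*} (s : Finset ι) (f : ι → (Fin n → ℂ)) :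
    (∑ i ∈ s, U * diagonal (f i) * star U) = U * diagonal (∑ i ∈ s, f i) * star U := by
  classical
  induction s using Finset.induction with
  | empty =>
      rw [Finset.sum_empty, Finset.sum_empty,
        show (0 : Fin n → ℂ) = fun _ => 0 from rfl, diagonal_zero, mul_zero, zero_mul]
  | @insert a s h ih =>
      rw [Finset.sum_insert h, Finset.sum_insert h, ih]
      have hfe : (f a + ∑ x ∈ s, f x) = fun i => f a i + (∑ x ∈ s, f x) i := rfl
      rw [hfe, ← diagonal_add, mul_add, add_mul]

lemma conj_trace (h1 : star U * U = 1) (d : Fin n → ℂ) :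
    (U * diagonal d * star U).trace = ∑ i, d i := by
  rw [trace_mul_cycle, h1, one_mul, trace_diagonal]

lemma conj_inv (h1 : star U * U = 1) (h2 : U * star U = 1) (d : Fin n → ℂ)
    (hd : ∀ i, d i ≠ 0) :
    (U * diagonal d * star U)⁻¹ = U * diagonal d⁻¹ * star U := by
  apply inv_eq_right_inv
  rw [conj_mul h1]
  have : d * d⁻¹ = 1 := by
    funext i
    exact mul_inv_cancel₀ (hd i)
  rw [this, ← conj_one h2]

lemma conj_psd (r : Fin n → ℝ) (hr : ∀ i, 0 ≤ r i) :
    PosSemidef (U * diagonal (fun i => (r i : ℂ)) * star U) := by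
  have hd : PosSemidef (diagonal (fun i => (r i : ℂ))) :=
    posSemidef_diagonal_iff.mpr fun i => by
      simpa using Complex.zero_le_real.mpr (hr i)
  simpa [star_eq_conjTranspose] using hd.mul_mul_conjTranspose_same U

lemma diagonal_real_star (r : Fin n → ℝ) :
    star (diagonal fun i => (r i : ℂ)) = diagonal fun i => (r i : ℂ) := by
  rw [star_eq_conjTranspose, diagonal_conjTranspose]
  exact congrArg diagonal (funext fun i => by simp [Complex.conj_ofReal])

lemma traceNorm_conj (h1 : star U * U = 1) (h2 : U * star U = 1) (r : Fin n → ℝ) :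
    traceNorm (U * diagonal (fun i => (r i : ℂ)) * star U) = ∑ i, |r i| := by
  set X : Matrix (Fin n) (Fin n) ℂ := U * diagonal (fun i => (r i : ℂ)) * star U with hX
  have hXh : Xᴴ = X := by
    rw [hX, ← star_eq_conjTranspose, Matrix.star_mul, Matrix.star_mul, star_star,
      diagonal_real_star, mul_assoc]
  have hsq : (U * diagonal (fun i => ((|r i| : ℝ) : ℂ)) * star U) ^ 2 = Xᴴ * X := by
    rw [hXh, hX, pow_two, conj_mul h1, conj_mul h1]
    have heq : ((fun i => ((|r i| : ℝ) : ℂ)) * fun i => ((|r i| : ℝ) : ℂ))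
        = ((fun i => (r i : ℂ)) * fun i => (r i : ℂ)) := by
      funext i
      simp only [Pi.mul_apply, ← Complex.ofReal_mul, abs_mul_abs_self]
    rw [heq]
  have cand : PosSemidef (U * diagonal (fun i => ((|r i| : ℝ) : ℂ)) * star U) :=
    conj_psd _ fun i => abs_nonneg _
  have hH := (posSemidef_conjTranspose_mul_self X).1
  have hsqrt : U * diagonal (fun i => ((|r i| : ℝ) : ℂ)) * star U
      = (hH.eigenvectorUnitary : Matrix (Fin n) (Fin n) ℂ) *
        diagonal (fun i => ((Real.sqrt (hH.eigenvalues i) : ℝ) : ℂ)) *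
        (star hH.eigenvectorUnitary : Matrix (Fin n) (Fin n) ℂ) := by
    open scoped MatrixOrder in
    calc _ = CFC.sqrt (Xᴴ * X) :=
          (CFC.sqrt_unique (by rw [← hsq, sq]) cand.nonneg).symm
      _ = cfc Real.sqrt (Xᴴ * X) :=
          (CFC.sqrt_eq_real_sqrt _ (posSemidef_conjTranspose_mul_self X).nonneg).trans
            (cfcₙ_eq_cfc (hf0 := by simp))
      _ = hH.cfc Real.sqrt := hH.cfc_eq _
      _ = _ := by simp [IsHermitian.cfc, Function.comp_def]
  rw [traceNorm, ← hsqrt, conj_trace h1]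
  rw [← Complex.ofReal_sum]
  exact Complex.ofReal_re _

end MIaux

lemma MIscalar {ι : Type*} [Fintype ι] [Nonempty ι] (p t : ι → ℝ) (δ : ℝ)
    (hp : ∀ i, 0 < p i) (hpt : ∀ i, p i ≤ t i)
    (hgap : ∀ i, t i - p i ≤ δ * t i) :
    (1/2) * ∑ i, |p i / (∑ j, p j) - t i / (∑ j, t j)| ≤ δ := by
  set P := ∑ j, p j with hP
  set Y := ∑ j, t j with hY
  have hPpos : 0 < P := Finset.sum_pos (fun i _ => hp i) Finset.univ_nonempty
  have hYP : P ≤ Y := Finset.sum_le_sum fun i _ => hpt i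
  have hYpos : 0 < Y := lt_of_lt_of_le hPpos hYP
  have hbound : ∀ i, |p i / P - t i / Y| ≤ (t i - p i) / Y + p i * ((Y - P) / (P * Y)) := by
    intro i
    have hid : p i / P - t i / Y = (p i - t i) / Y + p i * ((Y - P) / (P * Y)) := by
      field_simp
      ring
    rw [hid]
    refine (abs_add_le _ _).trans ?_
    have e1 : |(p i - t i) / Y| = (t i - p i) / Y := by
      rw [abs_div, abs_of_nonneg hYpos.le, abs_sub_comm, abs_of_nonneg (sub_nonneg.mpr (hpt i))]
    have e2 : |p i * ((Y - P) / (P * Y))| = p i * ((Y - P) / (P * Y)) := by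
      apply abs_of_nonneg
      apply mul_nonneg (hp i).le
      apply div_nonneg (by linarith) (by positivity)
    rw [e1, e2]
  have hsum : ∑ i, |p i / P - t i / Y| ≤ 2 * ((Y - P) / Y) := by
    calc ∑ i, |p i / P - t i / Y|
        ≤ ∑ i, ((t i - p i) / Y + p i * ((Y - P) / (P * Y))) :=
          Finset.sum_le_sum fun i _ => hbound i
      _ = (∑ i, (t i - p i)) / Y + (∑ i, p i) * ((Y - P) / (P * Y)) := by
          rw [Finset.sum_add_distrib, ← Finset.sum_div, ← Finset.sum_mul]
      _ = (Y - P) / Y + P * ((Y - P) / (P * Y)) := by rw [Finset.sum_sub_distrib, ← hP, ← hY]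
      _ = 2 * ((Y - P) / Y) := by field_simp; ring
  have hfin : (Y - P) / Y ≤ δ := by
    rw [div_le_iff₀ hYpos]
    calc Y - P = ∑ i, (t i - p i) := by rw [Finset.sum_sub_distrib, ← hP, ← hY]
      _ ≤ ∑ i, δ * t i := Finset.sum_le_sum fun i _ => hgap i
      _ = δ * Y := by rw [← Finset.mul_sum]
  linarith


/-- Matrix inversion I: approximating the normalized inverse of a positive
definite matrix via the truncated discrete-time Lyapunov series. -/
theorem matrix_inversion_discrete_approx {n : ℕ} (hn : 0 < n)
    (A M : Matrix (Fin n) (Fin n) ℂ) (hA : A.PosDef)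
    (κ : ℝ) (hκdef : κ = ‖A‖ * ‖A⁻¹‖) (hκ : 1 < κ)
    (ε : ℝ) (hε0 : 0 < ε) (hε1 : ε < 1)
    (hM : M.PosSemidef) (hMsq : M * M = 1 - (‖A‖⁻¹ : ℝ) • A)
    (T : ℕ) (hT : (⌈κ * Real.log (1/ε)⌉₊ : ℕ) ≤ T) :
    (1/2) * traceNorm
      ((∑ k ∈ Finset.range (T+1),
          M ^ k * ((n : ℂ)⁻¹ • (1 : Matrix (Fin n) (Fin n) ℂ)) * M ^ k).trace⁻¹ •
        (∑ k ∈ Finset.range (T+1),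
          M ^ k * ((n : ℂ)⁻¹ • (1 : Matrix (Fin n) (Fin n) ℂ)) * M ^ k) -
       (A⁻¹.trace)⁻¹ • A⁻¹) ≤ ε := by
  classical
  have hnonempty : Nonempty (Fin n) := ⟨⟨0, hn⟩⟩
  have hM1 : M.IsHermitian := hM.1
  set U : Matrix (Fin n) (Fin n) ℂ :=
    (Matrix.IsHermitian.eigenvectorUnitary hM1 : Matrix (Fin n) (Fin n) ℂ) with hUdef
  have hUmem := (Matrix.IsHermitian.eigenvectorUnitary hM1).2
  have h2 : U * star U = 1 := mem_unitaryGroup_iff.mp hUmem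
  have h1 : star U * U = 1 := mem_unitaryGroup_iff'.mp hUmem
  set μ : Fin n → ℝ := hM1.eigenvalues with hμdef
  have hspec : M = U * diagonal (fun i => (μ i : ℂ)) * star U := hM1.spectral_theorem
  have hA0 : A ≠ 0 := by
    intro h
    have hdet := hA.det_pos
    rw [h, det_zero] at hdet
    exact lt_irrefl _ hdet
  have hAnorm : (0:ℝ) < ‖A‖ := norm_pos_iff.mpr hA0
  have hAsmul : A = (‖A‖ : ℝ) • (1 - M * M) := by
    rw [hMsq, sub_sub_cancel, smul_smul, mul_inv_cancel₀ hAnorm.ne', one_smul]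
  set a : Fin n → ℝ := fun i => ‖A‖ * (1 - μ i ^ 2) with hadef
  have hMMdiag : 1 - M * M
      = U * diagonal ((1 : Fin n → ℂ) - (fun i => (μ i : ℂ)) * (fun i => (μ i : ℂ))) * star U := by
    rw [hspec, MIaux.conj_mul h1, ← MIaux.conj_sub, ← MIaux.conj_one h2]
  have hAdiag : A = U * diagonal (fun i => (a i : ℂ)) * star U := by
    calc A = (‖A‖ : ℝ) • (1 - M * M) := hAsmul
      _ = ((‖A‖ : ℝ) : ℂ) •
          (U * diagonal ((1 : Fin n → ℂ) - (fun i => (μ i : ℂ)) * (fun i => (μ i : ℂ))) * star U) := by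
          rw [hMMdiag, RCLike.real_smul_eq_coe_smul (K := ℂ)]
          rfl
      _ = U * diagonal (((‖A‖ : ℝ) : ℂ) •
            ((1 : Fin n → ℂ) - (fun i => (μ i : ℂ)) * (fun i => (μ i : ℂ)))) * star U :=
          MIaux.conj_smul _ _
      _ = U * diagonal (fun i => (a i : ℂ)) * star U := by
          refine congrArg (fun D => U * D * star U) (congrArg diagonal (funext fun i => ?_))
          simp only [Pi.smul_apply, Pi.sub_apply, Pi.mul_apply, Pi.one_apply, smul_eq_mul, hadef]
          push_cast
          ring
  have hAinvA : A⁻¹ * A = 1 := nonsing_inv_mul A ((isUnit_iff_isUnit_det A).mp hA.isUnit)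
  have hmain : ∀ i, 0 < a i ∧ (a i)⁻¹ ≤ ‖A⁻¹‖ := by
    intro i
    set v : EuclideanSpace ℂ (Fin n) := hM1.eigenvectorBasis i with hv
    have hv0 : (⇑v : Fin n → ℂ) ≠ 0 :=
      (WithLp.ofLp_eq_zero 2).not.mpr (hM1.eigenvectorBasis.orthonormal.ne_zero i)
    have hvnorm : ‖v‖ = 1 := hM1.eigenvectorBasis.orthonormal.1 i
    have hMv : M *ᵥ ⇑v = μ i • ⇑v := hM1.mulVec_eigenvectorBasis i
    have hAv : A *ᵥ ⇑v = a i • ⇑v := by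
      rw [hAsmul, smul_mulVec, sub_mulVec, one_mulVec, ← mulVec_mulVec, hMv,
        mulVec_smul, hMv, hadef]
      rw [smul_smul, smul_sub, smul_smul]
      module
    have hai : 0 < a i := by
      have hpos := hA.dotProduct_mulVec_pos hv0
      rw [hAv, dotProduct_smul, Complex.real_smul] at hpos
      have hz : (0:ℂ) < star (⇑v) ⬝ᵥ ⇑v := dotProduct_star_self_pos_iff.mpr hv0
      rw [Complex.lt_def] at hpos hz
      have h3 := hpos.1
      rw [Complex.re_ofReal_mul, Complex.zero_re] at h3
      have h4 := hz.1
      rw [Complex.zero_re] at h4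
      nlinarith
    refine ⟨hai, ?_⟩
    have hAiv : A⁻¹ *ᵥ ⇑v = ((a i)⁻¹ : ℝ) • ⇑v := by
      have h3 : A⁻¹ *ᵥ (A *ᵥ ⇑v) = ⇑v := by rw [mulVec_mulVec, hAinvA, one_mulVec]
      rw [hAv, mulVec_smul] at h3
      calc A⁻¹ *ᵥ ⇑v = (a i)⁻¹ • (a i • (A⁻¹ *ᵥ ⇑v)) := (inv_smul_smul₀ hai.ne' _).symm
        _ = (a i)⁻¹ • ⇑v := by rw [h3]
    have hb0 := l2_opNorm_mulVec A⁻¹ v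
    have hb : ‖(EuclideanSpace.equiv (Fin n) ℂ).symm
        (A⁻¹ *ᵥ ⇑v)‖ ≤ ‖A⁻¹‖ * ‖v‖ := hb0
    rw [hAiv] at hb
    have hlhs : (EuclideanSpace.equiv (Fin n) ℂ).symm (((a i)⁻¹ : ℝ) • ⇑v) = ((a i)⁻¹ : ℝ) • v :=
      rfl
    rw [hlhs, hvnorm, mul_one, norm_smul, hvnorm, mul_one, Real.norm_eq_abs,
      abs_of_pos (inv_pos.mpr hai)] at hb
    exact hb
  have hκpos : (0:ℝ) < κ := lt_trans one_pos hκ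
  have ht_pos : ∀ i, (0:ℝ) < 1 - μ i ^ 2 := by
    intro i
    have := (hmain i).1
    rw [hadef] at this
    simp only at this
    nlinarith
  have hxκ : ∀ i, μ i ^ 2 ≤ 1 - 1/κ := by
    intro i
    obtain ⟨hai, hbi⟩ := hmain i
    have h4 : 1 ≤ a i * ‖A⁻¹‖ := by
      have h5 := mul_le_mul_of_nonneg_left hbi hai.le
      rwa [mul_inv_cancel₀ hai.ne'] at h5
    have hexpand : a i = ‖A‖ * (1 - μ i ^ 2) := rfl
    have hN : (0:ℝ) < ‖A‖ * ‖A⁻¹‖ := by rw [← hκdef]; exact hκpos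
    have h6 : 1/(‖A‖ * ‖A⁻¹‖) ≤ 1 - μ i ^ 2 := by
      rw [div_le_iff₀ hN]
      nlinarith [h4, hexpand]
    rw [hκdef]
    linarith
  set p : Fin n → ℝ := fun i => ∑ k ∈ Finset.range (T+1), (μ i ^ 2) ^ k with hpdef
  set t : Fin n → ℝ := fun i => (1 - μ i ^ 2)⁻¹ with htdef
  set δ : ℝ := (1 - 1/κ)^(T+1) with hδdef
  have hμsq : ∀ i, (0:ℝ) ≤ μ i ^ 2 := fun i => sq_nonneg _
  have hp_pos : ∀ i, 0 < p i := by
    intro i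
    have h5 : (1:ℝ) ≤ p i := by
      have := Finset.single_le_sum (f := fun k => (μ i ^ 2) ^ k)
        (fun k _ => pow_nonneg (hμsq i) k) (Finset.mem_range.mpr (Nat.succ_pos T))
      simpa using this
    linarith
  have ht_pos' : ∀ i, 0 < t i := fun i => inv_pos.mpr (ht_pos i)
  have hgeom : ∀ i, t i - p i = (μ i ^ 2)^(T+1) * t i := by
    intro i
    have hg := geom_sum_mul (μ i ^ 2) (T+1)
    have hp1 : p i * (1 - μ i ^ 2) = 1 - (μ i ^ 2)^(T+1) := by
      have hpi : p i = ∑ k ∈ Finset.range (T+1), (μ i ^ 2) ^ k := rfl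
      rw [hpi]
      linear_combination -hg
    have hti : t i = (1 - μ i ^ 2)⁻¹ := rfl
    rw [hti]
    field_simp
    rw [eq_div_iff (ht_pos i).ne']
    linear_combination -hp1 + one_div_mul_cancel (ht_pos i).ne'
  have hδ0 : (0:ℝ) ≤ 1 - 1/κ := by
    have : 1/κ ≤ 1 := by rw [div_le_one hκpos]; linarith
    linarith
  have hgap : ∀ i, t i - p i ≤ δ * t i := by
    intro i
    rw [hgeom i, hδdef]
    have := pow_le_pow_left₀ (hμsq i) (hxκ i) (T+1)
    exact mul_le_mul_of_nonneg_right this (ht_pos' i).le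
  have hpt : ∀ i, p i ≤ t i := by
    intro i
    have h5 : 0 ≤ (μ i ^ 2)^(T+1) * t i :=
      mul_nonneg (pow_nonneg (hμsq i) _) (ht_pos' i).le
    have := hgeom i
    linarith
  have hδε : δ ≤ ε := by
    have hexp : 1 - 1/κ ≤ Real.exp (-(1/κ)) := by
      have := Real.add_one_le_exp (-(1/κ)); linarith
    have hpow : δ ≤ Real.exp (-(1/κ))^(T+1) := pow_le_pow_left₀ hδ0 hexp (T+1)
    have hxp : Real.exp (-(1/κ))^(T+1) = Real.exp (((T:ℝ)+1) * (-(1/κ))) := by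
      rw [← Real.exp_nat_mul]
      push_cast
      ring_nf
    have hTlog : κ * Real.log (1/ε) ≤ (T:ℝ) := Nat.ceil_le.mp hT
    have hl : Real.log (1/ε) = - Real.log ε := by rw [one_div, Real.log_inv]
    rw [hl] at hTlog
    have hlog : ((T:ℝ)+1) * (-(1/κ)) ≤ Real.log ε := by
      rw [div_eq_mul_inv, one_mul]
      have hκinv : 0 < κ⁻¹ := inv_pos.mpr hκpos
      nlinarith [mul_inv_cancel₀ hκpos.ne', hTlog, hκinv]
    calc δ ≤ Real.exp (-(1/κ))^(T+1) := hpow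
      _ = Real.exp (((T:ℝ)+1) * (-(1/κ))) := hxp
      _ ≤ ε := by
          rw [← Real.exp_log hε0]
          exact Real.exp_le_exp.mpr hlog
  -- remaining part
  have haC : ∀ i, ((a i : ℝ) : ℂ) ≠ 0 := fun i => by
    exact_mod_cast Complex.ofReal_ne_zero.mpr (hmain i).1.ne'
  have hAinv_diag : A⁻¹ = U * diagonal (fun i => (((a i)⁻¹ : ℝ) : ℂ)) * star U := by
    rw [hAdiag, MIaux.conj_inv h1 h2 _ haC]
    refine congrArg (fun D => U * D * star U) (congrArg diagonal (funext fun i => ?_))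
    simp only [Pi.inv_apply]
    push_cast
    rfl
  set μc : Fin n → ℂ := fun i => (μ i : ℂ) with hμcdef
  have hterm : ∀ k, M ^ k * ((n : ℂ)⁻¹ • (1 : Matrix (Fin n) (Fin n) ℂ)) * M ^ k
      = U * diagonal ((n : ℂ)⁻¹ • (μc ^ k * μc ^ k)) * star U := by
    intro k
    rw [hspec, MIaux.conj_pow h1 h2, mul_smul_comm, mul_one, smul_mul_assoc,
      MIaux.conj_mul h1, MIaux.conj_smul]
  have hSdiag : (∑ k ∈ Finset.range (T+1),
        M ^ k * ((n : ℂ)⁻¹ • (1 : Matrix (Fin n) (Fin n) ℂ)) * M ^ k)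
      = U * diagonal (fun i => (n : ℂ)⁻¹ * ((p i : ℝ) : ℂ)) * star U := by
    calc (∑ k ∈ Finset.range (T+1),
          M ^ k * ((n : ℂ)⁻¹ • (1 : Matrix (Fin n) (Fin n) ℂ)) * M ^ k)
        = ∑ k ∈ Finset.range (T+1),
            U * diagonal ((n : ℂ)⁻¹ • (μc ^ k * μc ^ k)) * star U :=
          Finset.sum_congr rfl fun k _ => hterm k
      _ = U * diagonal (∑ k ∈ Finset.range (T+1), (n : ℂ)⁻¹ • (μc ^ k * μc ^ k)) * star U :=
          MIaux.conj_sum _ _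
      _ = U * diagonal (fun i => (n : ℂ)⁻¹ * ((p i : ℝ) : ℂ)) * star U := by
          refine congrArg (fun D => U * D * star U) (congrArg diagonal (funext fun i => ?_))
          simp only [Finset.sum_apply, Pi.smul_apply, Pi.mul_apply, Pi.pow_apply, smul_eq_mul,
            hμcdef, hpdef]
          rw [← Finset.mul_sum]
          congr 1
          push_cast
          exact Finset.sum_congr rfl fun k _ => by ring
  -- the normalization scalars
  set P : ℝ := ∑ i, p i with hPdef
  set Yt : ℝ := ∑ i, t i with hYtdef
  have hPpos : 0 < P := Finset.sum_pos (fun i _ => hp_pos i) Finset.univ_nonempty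
  have hYtpos : 0 < Yt := Finset.sum_pos (fun i _ => ht_pos' i) Finset.univ_nonempty
  have hnR : ((n:ℝ)) ≠ 0 := Nat.cast_ne_zero.mpr hn.ne'
  set r : Fin n → ℝ := fun i => p i / P - t i / Yt with hrdef
  have hsum_a : (∑ j, ((a j)⁻¹ : ℝ)) = ‖A‖⁻¹ * Yt := by
    rw [hYtdef, Finset.mul_sum]
    refine Finset.sum_congr rfl fun j _ => ?_
    have : a j = ‖A‖ * (1 - μ j ^ 2) := rfl
    rw [this, mul_inv]
  have hΔ : ((∑ k ∈ Finset.range (T+1),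
          M ^ k * ((n : ℂ)⁻¹ • (1 : Matrix (Fin n) (Fin n) ℂ)) * M ^ k).trace⁻¹ •
        (∑ k ∈ Finset.range (T+1),
          M ^ k * ((n : ℂ)⁻¹ • (1 : Matrix (Fin n) (Fin n) ℂ)) * M ^ k) -
       (A⁻¹.trace)⁻¹ • A⁻¹)
      = U * diagonal (fun i => ((r i : ℝ) : ℂ)) * star U := by
    rw [hSdiag, hAinv_diag, MIaux.conj_trace h1, MIaux.conj_trace h1,
      MIaux.conj_smul, MIaux.conj_smul, MIaux.conj_sub]
    refine congrArg (fun D => U * D * star U) (congrArg diagonal (funext fun i => ?_))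
    simp only [Pi.sub_apply, Pi.smul_apply, smul_eq_mul]
    have hsum1 : (∑ j, (n : ℂ)⁻¹ * ((p j : ℝ) : ℂ)) = (n : ℂ)⁻¹ * ((P : ℝ) : ℂ) := by
      rw [← Finset.mul_sum, hPdef]
      push_cast
      rfl
    have hsum2 : (∑ j, (((a j)⁻¹ : ℝ) : ℂ)) = ((‖A‖⁻¹ * Yt : ℝ) : ℂ) := by
      rw [← hsum_a]
      push_cast
      rfl
    rw [hsum1, hsum2]
    have hreal : ((n:ℝ)⁻¹ * P)⁻¹ * ((n:ℝ)⁻¹ * p i) - (‖A‖⁻¹ * Yt)⁻¹ * (a i)⁻¹ = r i := by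
      have hai : a i = ‖A‖ * (1 - μ i ^ 2) := rfl
      have hti : t i = (1 - μ i ^ 2)⁻¹ := rfl
      have e1 : ((n:ℝ)⁻¹ * P)⁻¹ * ((n:ℝ)⁻¹ * p i) = p i / P := by
        rw [mul_inv, inv_inv]
        calc (n:ℝ) * P⁻¹ * ((n:ℝ)⁻¹ * p i)
            = ((n:ℝ) * (n:ℝ)⁻¹) * (P⁻¹ * p i) := by ring
          _ = p i / P := by
              rw [mul_inv_cancel₀ hnR, one_mul, ← div_eq_inv_mul]
      have hainv : (a i)⁻¹ = ‖A‖⁻¹ * t i := by rw [hai, mul_inv, hti]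
      have e2 : (‖A‖⁻¹ * Yt)⁻¹ * (a i)⁻¹ = t i / Yt := by
        rw [hainv, mul_inv, inv_inv]
        calc ‖A‖ * Yt⁻¹ * (‖A‖⁻¹ * t i) = (‖A‖ * ‖A‖⁻¹) * (Yt⁻¹ * t i) := by ring
          _ = t i / Yt := by rw [mul_inv_cancel₀ hAnorm.ne', one_mul, ← div_eq_inv_mul]
      rw [e1, e2, hrdef]
    calc ((n : ℂ)⁻¹ * ((P : ℝ) : ℂ))⁻¹ * ((n : ℂ)⁻¹ * ((p i : ℝ) : ℂ))
          - (((‖A‖⁻¹ * Yt : ℝ)) : ℂ)⁻¹ * (((a i)⁻¹ : ℝ) : ℂ)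
        = ((((n:ℝ)⁻¹ * P)⁻¹ * ((n:ℝ)⁻¹ * p i) - (‖A‖⁻¹ * Yt)⁻¹ * (a i)⁻¹ : ℝ) : ℂ) := by
          push_cast
          rfl
      _ = ((r i : ℝ) : ℂ) := by rw [hreal]
  rw [hΔ, MIaux.traceNorm_conj h1 h2 r]
  have hfinal := MIscalar p t δ hp_pos hpt hgap
  calc (1/2) * ∑ i, |r i| ≤ δ := hfinal
    _ ≤ ε := hδε
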